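/- There exists an increasing concave utility u:ℝ→ℝ with lim_{x→-∞}u(x)=-∞ and a nonnegative random variable B such that E[u(-B)] > -∞ but E[u(-B - c)] = -∞ for every constant c > 0. -/

import Mathlib

open Set Filter MeasureTheory


noncomputable def gg : ℝ → ℝ := fun y => -Real.exp ((y - 1) ^ 2)

lemma gg_hasDeriv (y : ℝ) :
    HasDerivAt gg (-(2 * (y - 1) * Real.exp ((y - 1) ^ 2))) y := by
  have h1 : HasDerivAt (fun y : ℝ => (y - 1) ^ 2) (2 * (y - 1)) y := by
    simpa using ((hasDerivAt_id y).sub_const 1).fun_pow 2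
  exact h1.exp.fun_neg.congr_deriv (by ring)

lemma gg_deriv : deriv gg = fun y => -(2 * (y - 1) * Real.exp ((y - 1) ^ 2)) :=
  funext fun y => (gg_hasDeriv y).deriv

lemma gg_deriv2 (y : ℝ) :
    HasDerivAt (deriv gg)
      (-((2 + (2 * (y - 1)) ^ 2) * Real.exp ((y - 1) ^ 2))) y := by
  rw [gg_deriv]
  have h1 : HasDerivAt (fun y : ℝ => (y - 1) ^ 2) (2 * (y - 1)) y := by
    simpa using ((hasDerivAt_id y).sub_const 1).fun_pow 2
  have h2 : HasDerivAt (fun y : ℝ => Real.exp ((y - 1) ^ 2))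
      (2 * (y - 1) * Real.exp ((y - 1) ^ 2)) y := by simpa [mul_comm] using h1.exp
  have h3 : HasDerivAt (fun y : ℝ => 2 * (y - 1)) 2 y := by
    simpa using ((hasDerivAt_id y).sub_const 1).const_mul 2
  have := (h3.fun_mul h2).fun_neg
  exact this.congr_deriv (by ring)

lemma gg_concave : ConcaveOn ℝ univ gg := by
  apply concaveOn_univ_of_deriv2_nonpos
  · exact fun y => (gg_hasDeriv y).differentiableAt
  · exact fun y => (gg_deriv2 y).differentiableAt
  · intro x
    have : deriv^[2] gg x = deriv (deriv gg) x := rfl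
    rw [this, (gg_deriv2 x).deriv]
    have := Real.exp_pos ((x - 1) ^ 2)
    nlinarith [sq_nonneg (2 * (x - 1))]

lemma gg_mono : ∀ s t : ℝ, s ≤ t → t ≤ 1 → gg s ≤ gg t := by
  intro s t hst ht1
  have : (t - 1) ^ 2 ≤ (s - 1) ^ 2 := by nlinarith
  simpa [gg] using Real.exp_le_exp.2 this

noncomputable def uu : ℝ → ℝ := fun x => gg (min x 1)

lemma uu_mono : Monotone uu := fun x y hxy =>
  gg_mono _ _ (min_le_min_right 1 hxy) (min_le_right y 1)

lemma uu_concave : ConcaveOn ℝ univ uu := by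
  refine ⟨convex_univ, fun x _ y _ a b ha hb hab => ?_⟩
  simp only [smul_eq_mul, uu]
  have h1 : a * min x 1 + b * min y 1 ≤ min (a * x + b * y) 1 := by
    refine le_min (by nlinarith [min_le_left x 1, min_le_left y 1]) ?_
    nlinarith [min_le_right x 1, min_le_right y 1]
  calc a * gg (min x 1) + b * gg (min y 1)
      ≤ gg (a * min x 1 + b * min y 1) := by
        simpa using gg_concave.2 (mem_univ (min x 1)) (mem_univ (min y 1)) ha hb hab
    _ ≤ gg (min (a * x + b * y) 1) :=
        gg_mono _ _ h1 (min_le_right _ 1)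

lemma uu_tendsto : Tendsto uu atBot atBot := by
  have ha : Tendsto (fun x : ℝ => -x + 1) atBot atTop :=
    tendsto_atTop_add_const_right atBot 1 tendsto_neg_atBot_atTop
  have hev : (fun x : ℝ => -x + 1) ≤ᶠ[atBot] fun x => (x - 1) ^ 2 := by
    filter_upwards [eventually_le_atBot (0 : ℝ)] with x hx
    nlinarith
  have h1 : Tendsto (fun x : ℝ => (x - 1) ^ 2) atBot atTop :=
    tendsto_atTop_mono' atBot hev ha
  have h2 : Tendsto (fun x : ℝ => -Real.exp ((x - 1) ^ 2)) atBot atBot :=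
    (tendsto_neg_atTop_atBot).comp (Real.tendsto_exp_atTop.comp h1)
  refine h2.congr' ?_
  filter_upwards [eventually_le_atBot (1 : ℝ)] with x hx
  simp [uu, gg, min_eq_left hx]

noncomputable def ff : ℝ → ℝ :=
  Set.indicator (Set.Ioi 0) (fun x => Real.exp (-x ^ 2 - 2 * x) / (1 + x ^ 2))

lemma ff_nonneg (x : ℝ) : 0 ≤ ff x := by
  unfold ff
  apply Set.indicator_nonneg
  intro y _
  positivity

lemma ff_meas : Measurable ff := by
  unfold ff
  exact (Measurable.div (by fun_prop) (by fun_prop)).indicator measurableSet_Ioi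

lemma ff_integrable : Integrable ff := by
  refine integrable_inv_one_add_sq.mono ff_meas.aestronglyMeasurable ?_
  refine ae_of_all _ fun x => ?_
  rw [Real.norm_eq_abs, Real.norm_eq_abs, abs_of_nonneg (ff_nonneg x),
    abs_of_nonneg (by positivity : (0:ℝ) ≤ (1 + x ^ 2)⁻¹)]
  unfold ff
  by_cases hx : x ∈ Set.Ioi (0:ℝ)
  · rw [Set.indicator_of_mem hx]
    rw [div_eq_mul_inv]
    have h1 : Real.exp (-x ^ 2 - 2 * x) ≤ 1 := by
      rw [Real.exp_le_one_iff]
      simp only [Set.mem_Ioi] at hx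
      nlinarith
    nlinarith [inv_nonneg.2 (by positivity : (0:ℝ) ≤ 1 + x ^ 2)]
  · rw [Set.indicator_of_notMem hx]
    positivity

noncomputable def II : ℝ := ∫ x, ff x

lemma II_pos : 0 < II := by
  rw [II, integral_pos_iff_support_of_nonneg ff_nonneg ff_integrable]
  have hsub : Set.Ioi (0:ℝ) ⊆ Function.support ff := by
    intro x hx
    simp only [Function.mem_support, ff, Set.indicator_of_mem hx]
    positivity
  calc (0:ENNReal) < ⊤ := by simp
    _ = volume (Set.Ioi (0:ℝ)) := (Real.volume_Ioi).symm
    _ ≤ volume (Function.support ff) := measure_mono hsub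

noncomputable def PP : Measure ℝ :=
  volume.withDensity (fun x => ENNReal.ofReal (II⁻¹ * ff x))

lemma PP_prob : IsProbabilityMeasure PP := by
  constructor
  rw [PP, withDensity_apply _ MeasurableSet.univ, Measure.restrict_univ,
    ← ofReal_integral_eq_lintegral_ofReal (ff_integrable.const_mul _)
      (ae_of_all _ fun x => mul_nonneg (inv_nonneg.2 II_pos.le) (ff_nonneg x))]
  rw [integral_const_mul, ← II, inv_mul_cancel₀ II_pos.ne']
  simp

lemma dens_meas : Measurable (fun x => ENNReal.ofReal (II⁻¹ * ff x)) :=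
  (measurable_const.mul ff_meas).ennreal_ofReal

lemma dens_nonneg (x : ℝ) : 0 ≤ II⁻¹ * ff x :=
  mul_nonneg (inv_nonneg.2 II_pos.le) (ff_nonneg x)

lemma int1 : Integrable (fun x : ℝ => uu (-(max x 0))) PP := by
  rw [PP, integrable_withDensity_iff dens_meas (ae_of_all _ fun x => ENNReal.ofReal_lt_top)]
  have hEq : (fun x : ℝ => uu (-(max x 0)) * (ENNReal.ofReal (II⁻¹ * ff x)).toReal)
      = Set.indicator (Set.Ioi 0) (fun x => (-Real.exp 1 * II⁻¹) * (1 + x ^ 2)⁻¹) := by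
    funext x
    rw [ENNReal.toReal_ofReal (dens_nonneg x)]
    by_cases hx : x ∈ Set.Ioi (0:ℝ)
    · rw [Set.indicator_of_mem hx]
      simp only [Set.mem_Ioi] at hx
      rw [max_eq_left hx.le]
      have h1 : uu (-x) = -Real.exp ((x + 1) ^ 2) := by
        rw [uu, min_eq_left (by linarith)]
        simp only [gg]
        rw [show (-x - 1) ^ 2 = (x + 1) ^ 2 from by ring]
      have hff : ff x = Real.exp (-x ^ 2 - 2 * x) / (1 + x ^ 2) := by
        unfold ff
        exact Set.indicator_of_mem (Set.mem_Ioi.2 hx) _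
      have h2 : Real.exp ((x + 1) ^ 2) * Real.exp (-x ^ 2 - 2 * x) = Real.exp 1 := by
        rw [← Real.exp_add]; congr 1; ring
      rw [h1, hff, div_eq_mul_inv, ← h2]
      ring
    · have hff : ff x = 0 := Set.indicator_of_notMem hx _
      rw [Set.indicator_of_notMem hx, hff]
      ring
  rw [hEq]
  exact (integrable_inv_one_add_sq.const_mul _).indicator measurableSet_Ioi

lemma nonint (c : ℝ) (hc : 0 < c) :
    ¬ Integrable (fun x : ℝ => uu (-(max x 0) - c)) PP := by
  intro hint
  rw [PP, integrable_withDensity_iff dens_meas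
    (ae_of_all _ fun x => ENNReal.ofReal_lt_top)] at hint
  have hF : ∀ x : ℝ, 0 < x →
      uu (-(max x 0) - c) * (ENNReal.ofReal (II⁻¹ * ff x)).toReal
      = -(II⁻¹ * (Real.exp (2 * c * x + (c + 1) ^ 2) / (1 + x ^ 2))) := by
    intro x hx
    rw [ENNReal.toReal_ofReal (dens_nonneg x), max_eq_left hx.le]
    have huu : uu (-x - c) = -Real.exp ((x + c + 1) ^ 2) := by
      rw [uu, min_eq_left (by nlinarith)]
      simp only [gg]
      rw [show (-x - c - 1) ^ 2 = (x + c + 1) ^ 2 from by ring]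
    have hff : ff x = Real.exp (-x ^ 2 - 2 * x) / (1 + x ^ 2) := by
      unfold ff
      exact Set.indicator_of_mem (Set.mem_Ioi.2 hx) _
    have hexp : Real.exp ((x + c + 1) ^ 2) * Real.exp (-x ^ 2 - 2 * x)
        = Real.exp (2 * c * x + (c + 1) ^ 2) := by
      rw [← Real.exp_add]; congr 1; ring
    rw [huu, hff, div_eq_mul_inv, div_eq_mul_inv, ← hexp]
    ring
  -- the lower bounding function tends to infinity
  have h0 : Tendsto (fun y : ℝ => Real.exp y / y ^ 2) atTop atTop :=
    Real.tendsto_exp_div_pow_atTop 2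
  have h1 : Tendsto (fun x : ℝ => 2 * c * x) atTop atTop :=
    Tendsto.const_mul_atTop (by positivity) tendsto_id
  have h2 : Tendsto (fun x : ℝ => Real.exp (2 * c * x) / (2 * c * x) ^ 2) atTop atTop :=
    h0.comp h1
  set C : ℝ := II⁻¹ * Real.exp ((c + 1) ^ 2) * (2 * c ^ 2) with hC
  have hCpos : 0 < C := by
    rw [hC]
    exact mul_pos (mul_pos (inv_pos.2 II_pos) (Real.exp_pos _)) (by nlinarith)
  have h3 : Tendsto (fun x : ℝ => C * (Real.exp (2 * c * x) / (2 * c * x) ^ 2)) atTop atTop :=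
    Tendsto.const_mul_atTop hCpos h2
  have hT : Tendsto (fun x : ℝ => II⁻¹ * (Real.exp (2 * c * x + (c + 1) ^ 2) / (1 + x ^ 2)))
      atTop atTop := by
    refine tendsto_atTop_mono' atTop ?_ h3
    filter_upwards [eventually_ge_atTop (1:ℝ)] with x hx1
    have hE := Real.exp_pos (2 * c * x)
    have he2 := Real.exp_pos ((c + 1) ^ 2)
    have hII := inv_pos.2 II_pos
    rw [Real.exp_add]
    rw [mul_div_assoc' C, mul_div_assoc' II⁻¹]
    rw [div_le_div_iff₀ (by positivity) (by positivity)]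
    have key : (1:ℝ) + x ^ 2 ≤ 2 * x ^ 2 := by nlinarith
    calc C * Real.exp (2 * c * x) * (1 + x ^ 2)
        ≤ C * Real.exp (2 * c * x) * (2 * x ^ 2) :=
          mul_le_mul_of_nonneg_left key (by positivity)
      _ = II⁻¹ * (Real.exp (2 * c * x) * Real.exp ((c + 1) ^ 2)) * (2 * c * x) ^ 2 := by
          rw [hC]; ring
  have hev : ∀ᶠ x in atTop,
      1 ≤ ‖uu (-(max x 0) - c) * (ENNReal.ofReal (II⁻¹ * ff x)).toReal‖ := by
    filter_upwards [hT.eventually_ge_atTop 1, eventually_gt_atTop (0:ℝ)] with x hx1 hx0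
    rw [hF x hx0, norm_neg, Real.norm_eq_abs,
      abs_of_nonneg (by positivity)]
    exact hx1
  obtain ⟨N, hN⟩ := eventually_atTop.1 hev
  have hind : Integrable (Set.indicator (Set.Ioi N) (fun _ => (1:ℝ))) volume := by
    refine hint.mono
      ((measurable_const.indicator measurableSet_Ioi).aestronglyMeasurable)
      (ae_of_all _ fun x => ?_)
    by_cases hx : x ∈ Set.Ioi N
    · rw [Set.indicator_of_mem hx]
      simpa using hN x (le_of_lt hx)
    · rw [Set.indicator_of_notMem hx]
      simp only [norm_zero, norm_mul]
      positivity
  rw [integrable_indicator_iff measurableSet_Ioi, integrableOn_const_iff] at hind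
  simp [Real.volume_Ioi] at hind

/-- There exists an increasing concave utility `u : ℝ → ℝ` with `u(-∞) = -∞` and a
nonnegative random variable `B` (on some probability space) such that
`E[u(-B)] > -∞` but `E[u(-B - c)] = -∞` for every constant `c > 0`.
Since `u(-B) ≤ u(0)` is bounded above, `E[u(-B-c)] > -∞` is expressed as integrability. -/
theorem exists_claim_with_nonintegrable_shift :
    ∃ (Ω : Type) (_ : MeasurableSpace Ω) (P : Measure Ω), IsProbabilityMeasure P ∧
      ∃ (u : ℝ → ℝ) (B : Ω → ℝ), Monotone u ∧ ConcaveOn ℝ univ u ∧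
        Tendsto u atBot atBot ∧ Measurable B ∧ (∀ ω, 0 ≤ B ω) ∧
        Integrable (fun ω => u (-(B ω))) P ∧
        ∀ c : ℝ, 0 < c → ¬ Integrable (fun ω => u (-(B ω) - c)) P := by
  refine ⟨ℝ, inferInstance, PP, PP_prob, uu, fun x => max x 0, uu_mono, uu_concave,
    uu_tendsto, measurable_id.max measurable_const, fun x => le_max_right x 0, int1,
    fun c hc => nonint c hc⟩
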